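/- Let d ≥ 1 and k ≤ 6 be natural numbers and let m₁, …, m_k be natural numbers, each of which is even, such that m₁ + ⋯ + m_k = 3(d − 1) and m₁² + ⋯ + m_k² = d² − 1. Then d = 1 or d = 5. -/
import Mathlib

/-- If `d ≥ 1`, `k ≤ 6` and `m₁, …, m_k` are even natural numbers with
`∑ mᵢ = 3(d − 1)` and `∑ mᵢ² = d² − 1`, then `d = 1` or `d = 5`. -/
theorem stmt17 (d k : ℕ) (hd : 1 ≤ d) (hk : k ≤ 6) (m : Fin k → ℕ)
    (heven : ∀ i, Even (m i)) (hsum : ∑ i, m i = 3 * (d - 1))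
    (hsq : ∑ i, (m i) ^ 2 = d ^ 2 - 1) : d = 1 ∨ d = 5 := by
  -- Cauchy–Schwarz: (∑ m)² ≤ k ∑ m²
  have hcs : (∑ i, m i) ^ 2 ≤ k * ∑ i, (m i) ^ 2 := by
    simpa using sq_sum_le_card_mul_sum_sq (s := Finset.univ) (f := m)
  obtain ⟨e, rfl⟩ : ∃ e, d = e + 1 := ⟨d - 1, by omega⟩
  have hsum' : ∑ i, m i = 3 * e := by simpa using hsum
  have hsq' : ∑ i, (m i) ^ 2 = e ^ 2 + 2 * e := by
    have : (e + 1) ^ 2 = e ^ 2 + 2 * e + 1 := by ring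
    omega
  have he4 : e ≤ 4 := by
    rw [hsum', hsq'] at hcs
    nlinarith [hk]
  -- parity: 3e = ∑ m is even, so e is even
  have hpar : Even (3 * e) := by
    rw [← hsum']; exact Finset.even_sum _ fun i _ => heven i
  have heE : e = 0 ∨ e = 2 ∨ e = 4 := by
    obtain ⟨t, ht⟩ := hpar; omega
  rcases heE with h | h | h
  · left; omega
  · -- d = 3: ∑ m = 6, ∑ m² = 8; each m i ∈ {0,2}, so ∑ m² = 2 ∑ m, i.e. 8 = 12
    exfalso
    subst h
    have h8 : ∑ i, (m i) ^ 2 = 8 := by rw [hsq']; norm_num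
    have h6 : ∑ i, m i = 6 := by rw [hsum']
    have hle : ∀ i, (m i) ^ 2 = 2 * m i := by
      intro i
      have hsle : (m i) ^ 2 ≤ 8 :=
        h8 ▸ Finset.single_le_sum (f := fun j => (m j) ^ 2)
          (fun j _ => Nat.zero_le _) (Finset.mem_univ i)
      have h2 : m i ≤ 2 := by nlinarith
      obtain ⟨t, ht⟩ := heven i
      have : m i = 0 ∨ m i = 2 := by omega
      rcases this with h | h <;> rw [h] <;> norm_num
    have : ∑ i, (m i) ^ 2 = 2 * ∑ i, m i := by
      rw [Finset.mul_sum]; exact Finset.sum_congr rfl fun i _ => hle i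
    omega
  · right; omega
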